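/- arXiv:2604.02027 — 2 statements merged into one kernel-verified Lean document; each statement's English description precedes it below -/
import Mathlib

section
/- The minimization of ||B − B^d̃||_F^2 over d̃ ∈ {0,1}^N with Σ_i d̃_i = N − x is equivalent to minimizing d^T Q d over d ∈ {0,1}^N with Σ_i d_i = x, via the bijection d = 1 − d̃, where Q_{ij} = b_i b_j (v_i^T v_j)^2; moreover ||B − B^d̃||_F^2 = (d̃ − 1)^T Q (d̃ − 1). -/
lemma key_sum {N M : ℕ} (w : Fin N → ℝ) (v : Fin N → Fin M → ℝ) :
    ∑ r, ∑ s, (∑ i, w i * (v i r * v i s))^2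
      = ∑ i, ∑ j, w i * w j * (∑ t, v i t * v j t)^2 := by
  have h1 : ∀ i j : Fin N,
      ∑ r, ∑ s, (w i * (v i r * v i s)) * (w j * (v j r * v j s))
        = w i * w j * (∑ t, v i t * v j t)^2 := by
    intro i j
    rw [sq, Finset.sum_mul_sum, Finset.mul_sum]
    refine Finset.sum_congr rfl fun r _ => ?_
    rw [Finset.mul_sum]
    refine Finset.sum_congr rfl fun s _ => ?_
    ring
  calc ∑ r, ∑ s, (∑ i, w i * (v i r * v i s))^2
      = ∑ r, ∑ s, ∑ i, ∑ j, (w i * (v i r * v i s)) * (w j * (v j r * v j s)) := by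
        refine Finset.sum_congr rfl fun r _ => Finset.sum_congr rfl fun s _ => ?_
        rw [sq, Finset.sum_mul_sum]
    _ = ∑ r, ∑ i, ∑ s, ∑ j, (w i * (v i r * v i s)) * (w j * (v j r * v j s)) := by
        exact Finset.sum_congr rfl fun r _ => Finset.sum_comm
    _ = ∑ i, ∑ r, ∑ s, ∑ j, (w i * (v i r * v i s)) * (w j * (v j r * v j s)) :=
        Finset.sum_comm
    _ = ∑ i, ∑ r, ∑ j, ∑ s, (w i * (v i r * v i s)) * (w j * (v j r * v j s)) := by
        exact Finset.sum_congr rfl fun i _ => Finset.sum_congr rfl fun r _ =>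
          Finset.sum_comm
    _ = ∑ i, ∑ j, ∑ r, ∑ s, (w i * (v i r * v i s)) * (w j * (v j r * v j s)) := by
        exact Finset.sum_congr rfl fun i _ => Finset.sum_comm
    _ = ∑ i, ∑ j, w i * w j * (∑ t, v i t * v j t)^2 :=
        Finset.sum_congr rfl fun i _ => Finset.sum_congr rfl fun j _ => h1 i j

/-- Minimizing `‖B - B^d̃‖_F²` over binary `d̃` with `∑ d̃ = N - x` is
equivalent to minimizing `dᵀ Q d` over binary `d` with `∑ d = x`, via `d = 1 - d̃`;
moreover `‖B - B^d̃‖_F² = (d̃ - 1)ᵀ Q (d̃ - 1)`. -/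
theorem minimization_equivalence
    (M N x : ℕ) (hx : x ≤ N) (b : Fin N → ℝ) (hb : ∀ i, 0 < b i)
    (v : Fin N → (Fin M → ℝ))
    (Q : Matrix (Fin N) (Fin N) ℝ)
    (hQ : ∀ i j, Q i j = b i * b j * (dotProduct (v i) (v j))^2)
    (D : (Fin N → Bool) → ℝ)
    (hD : ∀ dt, D dt = ∑ r, ∑ s,
        ((∑ i, b i • Matrix.vecMulVec (v i) (v i)) r s
          - (∑ i, (if dt i then b i else 0) • Matrix.vecMulVec (v i) (v i)) r s)^2) :
    (∀ dt : Fin N → Bool,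
        D dt = ∑ i, ∑ j, ((if dt i then (1:ℝ) else 0) - 1) * Q i j
            * ((if dt j then (1:ℝ) else 0) - 1))
    ∧ (∀ m : ℝ,
        IsLeast {y | ∃ dt : Fin N → Bool,
            (Finset.univ.filter (fun i => dt i = true)).card = N - x ∧ y = D dt} m
        ↔ IsLeast {y | ∃ d : Fin N → Bool,
            (Finset.univ.filter (fun i => d i = true)).card = x ∧
            y = ∑ i, ∑ j, (if d i then (1:ℝ) else 0) * Q i j
                * (if d j then (1:ℝ) else 0)} m) := by
  -- Part 1
  have part1 : ∀ dt : Fin N → Bool,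
      D dt = ∑ i, ∑ j, ((if dt i then (1:ℝ) else 0) - 1) * Q i j
          * ((if dt j then (1:ℝ) else 0) - 1) := by
    intro dt
    rw [hD dt]
    have hentry : ∀ r s, ((∑ i, b i • Matrix.vecMulVec (v i) (v i)) r s
          - (∑ i, (if dt i then b i else 0) • Matrix.vecMulVec (v i) (v i)) r s)
        = ∑ i, (b i - (if dt i then b i else 0)) * (v i r * v i s) := by
      intro r s
      simp only [Matrix.sum_apply, Matrix.vecMulVec_apply, Pi.smul_apply, smul_eq_mul,
        ← Finset.sum_sub_distrib, ite_smul, zero_smul, Matrix.smul_apply]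
      refine Finset.sum_congr rfl fun i _ => ?_
      by_cases hi : dt i <;> simp [hi, Matrix.vecMulVec_apply]
    calc ∑ r, ∑ s, ((∑ i, b i • Matrix.vecMulVec (v i) (v i)) r s
          - (∑ i, (if dt i then b i else 0) • Matrix.vecMulVec (v i) (v i)) r s)^2
        = ∑ r, ∑ s, (∑ i, (b i - (if dt i then b i else 0)) * (v i r * v i s))^2 := by
          exact Finset.sum_congr rfl fun r _ => Finset.sum_congr rfl fun s _ => by
            rw [hentry r s]
      _ = ∑ i, ∑ j, (b i - (if dt i then b i else 0)) * (b j - (if dt j then b j else 0))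
            * (∑ t, v i t * v j t)^2 := key_sum _ _
      _ = ∑ i, ∑ j, ((if dt i then (1:ℝ) else 0) - 1) * Q i j
            * ((if dt j then (1:ℝ) else 0) - 1) := by
          refine Finset.sum_congr rfl fun i _ => Finset.sum_congr rfl fun j _ => ?_
          rw [hQ i j, dotProduct]
          by_cases hi : dt i <;> by_cases hj : dt j <;> simp [hi, hj] <;> ring
  refine ⟨part1, fun m => ?_⟩
  -- the quadratic form transformation under negation
  have hform : ∀ dt : Fin N → Bool,
      (∑ i, ∑ j, ((if dt i then (1:ℝ) else 0) - 1) * Q i j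
          * ((if dt j then (1:ℝ) else 0) - 1))
      = ∑ i, ∑ j, (if !dt i then (1:ℝ) else 0) * Q i j * (if !dt j then (1:ℝ) else 0) := by
    intro dt
    refine Finset.sum_congr rfl fun i _ => Finset.sum_congr rfl fun j _ => ?_
    by_cases hi : dt i <;> by_cases hj : dt j <;> simp [hi, hj] <;> ring
  have hcard : ∀ dt : Fin N → Bool,
      (Finset.univ.filter (fun i => (!dt i) = true)).card
        = N - (Finset.univ.filter (fun i => dt i = true)).card := by
    intro dt
    have h := Finset.card_filter_add_card_filter_not
      (s := (Finset.univ : Finset (Fin N))) (p := fun i => dt i = true)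
    have hc : (Finset.univ.filter (fun i => (!dt i) = true))
        = (Finset.univ.filter (fun i => ¬ dt i = true)) := by
      refine Finset.filter_congr fun i _ => by simp
    rw [hc]
    simp only [Finset.card_univ, Fintype.card_fin] at h
    omega
  have hsets : {y | ∃ dt : Fin N → Bool,
        (Finset.univ.filter (fun i => dt i = true)).card = N - x ∧ y = D dt}
      = {y | ∃ d : Fin N → Bool,
        (Finset.univ.filter (fun i => d i = true)).card = x ∧
        y = ∑ i, ∑ j, (if d i then (1:ℝ) else 0) * Q i j
            * (if d j then (1:ℝ) else 0)} := by
    ext y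
    constructor
    · rintro ⟨dt, hcd, rfl⟩
      refine ⟨fun i => !dt i, ?_, ?_⟩
      · rw [hcard dt, hcd]; omega
      · rw [part1 dt, hform dt]
    · rintro ⟨d, hcd, rfl⟩
      refine ⟨fun i => !d i, ?_, ?_⟩
      · rw [hcard d, hcd]
      · rw [part1, hform]
        simp
  rw [hsets]
end

section
/- Let P_s and P_0 be reflections (P² = 1, P = P†, each fixing a codimension-1 subspace) and let U be unitary with U|0⟩ = √p |s⟩ + √(1−p)|f⟩ where P_s|s⟩ = −|s⟩, P_s|f⟩ = |f⟩, P_0 = 1 − 2|0⟩⟨0|, 0 < p < 1. Then the operator Q = −U P_0 U† P_s restricted to the 2-dimensional invariant subspace spanned by U|0⟩ and P_s U|0⟩ has eigenvalues e^{±2i arcsin√p}. -/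
open Matrix

lemma vecMulVec_mulVec' {n : Type*} [Fintype n] (x y u : n → ℂ) :
    (Matrix.vecMulVec x y).mulVec u = (y ⬝ᵥ u) • x := by
  ext i
  simp only [Matrix.mulVec, dotProduct, Matrix.vecMulVec_apply, Pi.smul_apply,
    smul_eq_mul, Finset.sum_mul]
  exact Finset.sum_congr rfl fun j _ => by ring

/-- Amplitude-estimation setting. With reflections `P_s` (negating the
success state `|s⟩` and fixing `|f⟩`) and `P_0 = 1 - 2|0⟩⟨0|`, a unitary `U` with
`U|0⟩ = √p |s⟩ + √(1-p)|f⟩` and `0 < p < 1`, the Grover-type operator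
`Q = -U P_0 U† P_s` has, on the 2-dimensional invariant subspace spanned by `U|0⟩`
and `P_s U|0⟩`, the eigenvalues `e^{±2i·arcsin √p}`. -/
theorem grover_operator_eigenvalues
    {n : Type*} [Fintype n] [DecidableEq n]
    (U Ps P0 Q : Matrix n n ℂ)
    (hUU : U ∈ Matrix.unitaryGroup n ℂ)
    (hPs2 : Ps * Ps = 1) (hPsH : Ps.conjTranspose = Ps)
    (z s f : n → ℂ)
    (hz : ∑ k, Complex.normSq (z k) = 1)
    (hs : ∑ k, Complex.normSq (s k) = 1)
    (hf : ∑ k, Complex.normSq (f k) = 1)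
    (hsf : ∑ k, (starRingEnd ℂ) (s k) * f k = 0)
    (hP0 : P0 = 1 - (2:ℂ) • Matrix.vecMulVec z (star z))
    (hPss : Ps.mulVec s = -s) (hPsf : Ps.mulVec f = f)
    (p : ℝ) (hp0 : 0 < p) (hp1 : p < 1)
    (hUz : U.mulVec z = (Real.sqrt p : ℂ) • s + (Real.sqrt (1 - p) : ℂ) • f)
    (hQ : Q = -(U * P0 * U.conjTranspose * Ps)) :
    ∃ wp wm : n → ℂ, wp ≠ 0 ∧ wm ≠ 0
      ∧ wp ∈ Submodule.span ℂ
          ({U.mulVec z, Ps.mulVec (U.mulVec z)} : Set (n → ℂ))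
      ∧ wm ∈ Submodule.span ℂ
          ({U.mulVec z, Ps.mulVec (U.mulVec z)} : Set (n → ℂ))
      ∧ Q.mulVec wp
          = Complex.exp (2 * Complex.I * (Real.arcsin (Real.sqrt p) : ℝ)) • wp
      ∧ Q.mulVec wm
          = Complex.exp (-(2 * Complex.I * (Real.arcsin (Real.sqrt p) : ℝ))) • wm := by
  have hp0' : (0:ℝ) ≤ p := hp0.le
  have hp1' : (0:ℝ) ≤ 1 - p := by linarith
  set a : ℂ := (Real.sqrt p : ℂ) with ha
  set b : ℂ := (Real.sqrt (1-p) : ℂ) with hb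
  have ha2 : a * a = (p:ℂ) := by
    rw [ha, ← Complex.ofReal_mul, Real.mul_self_sqrt hp0']
  have hb2 : b * b = 1 - (p:ℂ) := by
    rw [hb, ← Complex.ofReal_mul, Real.mul_self_sqrt hp1']
    push_cast; ring
  have ha0 : a ≠ 0 := Complex.ofReal_ne_zero.mpr (Real.sqrt_pos.mpr hp0).ne'
  have hb0 : b ≠ 0 := Complex.ofReal_ne_zero.mpr (Real.sqrt_pos.mpr (by linarith)).ne'
  -- basic dot products
  have hss : star s ⬝ᵥ s = 1 := by
    have : star s ⬝ᵥ s = ((∑ k, Complex.normSq (s k) : ℝ) : ℂ) := by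
      rw [Complex.ofReal_sum]
      simp [dotProduct, Complex.normSq_eq_conj_mul_self]
    rw [this, hs, Complex.ofReal_one]
  have hff : star f ⬝ᵥ f = 1 := by
    have : star f ⬝ᵥ f = ((∑ k, Complex.normSq (f k) : ℝ) : ℂ) := by
      rw [Complex.ofReal_sum]
      simp [dotProduct, Complex.normSq_eq_conj_mul_self]
    rw [this, hf, Complex.ofReal_one]
  have hsf' : star s ⬝ᵥ f = 0 := by
    simpa [dotProduct] using hsf
  have hfs : star f ⬝ᵥ s = 0 := by
    have := congrArg (starRingEnd ℂ) hsf
    simpa [dotProduct, map_sum, mul_comm] using this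
  set ψ : n → ℂ := U.mulVec z with hψdef
  have hψ : ψ = a • s + b • f := hUz
  have hPsψ : Ps.mulVec ψ = -(a • s) + b • f := by
    rw [hψ, Matrix.mulVec_add, Matrix.mulVec_smul, Matrix.mulVec_smul, hPss, hPsf, smul_neg]
  have hUUH : U * U.conjTranspose = 1 := by
    simpa [Matrix.star_eq_conjTranspose] using (Matrix.mem_unitaryGroup_iff).mp hUU
  -- the key formula for Q
  have key : ∀ w : n → ℂ,
      Q.mulVec w = (2 * (star ψ ⬝ᵥ Ps.mulVec w)) • ψ - Ps.mulVec w := by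
    intro w
    set w' := Ps.mulVec w with hw'
    set u := U.conjTranspose.mulVec w' with hu
    have h1 : Q.mulVec w = -(U.mulVec (P0.mulVec u)) := by
      rw [hQ, Matrix.neg_mulVec, ← Matrix.mulVec_mulVec, ← Matrix.mulVec_mulVec,
        ← Matrix.mulVec_mulVec]
    have hP0u : P0.mulVec u = u - (2:ℂ) • ((star z ⬝ᵥ u) • z) := by
      rw [hP0, Matrix.sub_mulVec, Matrix.one_mulVec, Matrix.smul_mulVec,
        vecMulVec_mulVec']
    have hUu : U.mulVec u = w' := by
      rw [hu, Matrix.mulVec_mulVec, hUUH, Matrix.one_mulVec]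
    have hc : star z ⬝ᵥ u = star ψ ⬝ᵥ w' := by
      rw [hu, Matrix.dotProduct_mulVec, hψdef, Matrix.star_mulVec]
    rw [h1, hP0u, Matrix.mulVec_sub, Matrix.mulVec_smul, Matrix.mulVec_smul, hUu, hc,
      hψdef, neg_sub, smul_smul]
  -- trigonometric identities
  set θ : ℝ := Real.arcsin (Real.sqrt p) with hθ
  have hθs : Real.sin θ = Real.sqrt p :=
    Real.sin_arcsin (by linarith [Real.sqrt_nonneg p]) (Real.sqrt_le_one.mpr hp1.le)
  have hθc : Real.cos θ = Real.sqrt (1-p) := by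
    rw [hθ, Real.cos_arcsin, Real.sq_sqrt hp0']
  have hcos2 : Real.cos (2*θ) = 1 - 2*p := by
    rw [Real.cos_two_mul, hθc, Real.sq_sqrt hp1']; ring
  have hsin2 : Real.sin (2*θ) = 2 * Real.sqrt p * Real.sqrt (1-p) := by
    rw [Real.sin_two_mul, hθs, hθc]
  have hexp : Complex.exp (2 * Complex.I * (θ:ℝ)) = 1 - 2*(p:ℂ) + 2*a*b*Complex.I := by
    have h2θ : (2:ℂ) * Complex.I * (θ:ℝ) = ((2*θ : ℝ):ℂ) * Complex.I := by
      push_cast; ring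
    rw [h2θ, Complex.exp_mul_I, ← Complex.ofReal_cos, ← Complex.ofReal_sin, hcos2, hsin2,
      ha, hb]
    push_cast; ring
  have hexpm : Complex.exp (-(2 * Complex.I * (θ:ℝ))) = 1 - 2*(p:ℂ) - 2*a*b*Complex.I := by
    have h2θ : -((2:ℂ) * Complex.I * (θ:ℝ)) = ((-(2*θ) : ℝ):ℂ) * Complex.I := by
      push_cast; ring
    rw [h2θ, Complex.exp_mul_I, ← Complex.ofReal_cos, ← Complex.ofReal_sin,
      Real.cos_neg, Real.sin_neg, hcos2, hsin2, ha, hb]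
    push_cast; ring
  -- dot products with ψ
  have hdot : ∀ x y : ℂ, star ψ ⬝ᵥ (x • s + y • f) = a * x + b * y := by
    intro x y
    rw [hψ, star_add, star_smul, star_smul]
    simp only [add_dotProduct, smul_dotProduct, dotProduct_add,
      dotProduct_smul, smul_eq_mul, hss, hsf', hfs, hff]
    rw [ha, hb]
    simp [Complex.star_def, Complex.conj_ofReal]
    ring
  have hmem1 : ψ ∈ Submodule.span ℂ ({ψ, Ps.mulVec ψ} : Set (n → ℂ)) :=
    Submodule.subset_span (Set.mem_insert _ _)
  have hmem2 : Ps.mulVec ψ ∈ Submodule.span ℂ ({ψ, Ps.mulVec ψ} : Set (n → ℂ)) :=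
    Submodule.subset_span (Set.mem_insert_of_mem _ rfl)
  have hsmem : s ∈ Submodule.span ℂ ({ψ, Ps.mulVec ψ} : Set (n → ℂ)) := by
    have hseq : s = (2*a)⁻¹ • (ψ - Ps.mulVec ψ) := by
      rw [hPsψ, hψ]
      ext k
      simp only [Pi.smul_apply, Pi.sub_apply, Pi.add_apply, Pi.neg_apply, smul_eq_mul]
      field_simp
      ring
    rw [hseq]
    exact Submodule.smul_mem _ _ (Submodule.sub_mem _ hmem1 hmem2)
  have hfmem : f ∈ Submodule.span ℂ ({ψ, Ps.mulVec ψ} : Set (n → ℂ)) := by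
    have hfeq : f = (2*b)⁻¹ • (ψ + Ps.mulVec ψ) := by
      rw [hPsψ, hψ]
      ext k
      simp only [Pi.smul_apply, Pi.sub_apply, Pi.add_apply, Pi.neg_apply, smul_eq_mul]
      field_simp
      ring
    rw [hfeq]
    exact Submodule.smul_mem _ _ (Submodule.add_mem _ hmem1 hmem2)
  refine ⟨s + Complex.I • f, s - Complex.I • f, ?_, ?_, ?_, ?_, ?_, ?_⟩
  · intro h
    have h1 : star s ⬝ᵥ (s + Complex.I • f) = 1 := by
      simp [dotProduct_add, dotProduct_smul, hss, hsf']
    rw [h, dotProduct_zero] at h1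
    exact zero_ne_one h1
  · intro h
    have h1 : star s ⬝ᵥ (s - Complex.I • f) = 1 := by
      simp [dotProduct_sub, dotProduct_smul, hss, hsf']
    rw [h, dotProduct_zero] at h1
    exact zero_ne_one h1
  · exact Submodule.add_mem _ hsmem (Submodule.smul_mem _ _ hfmem)
  · exact Submodule.sub_mem _ hsmem (Submodule.smul_mem _ _ hfmem)
  · -- eigenvalue e^{+2iθ}
    rw [key, hexp]
    have hPsw : Ps.mulVec (s + Complex.I • f) = (-1 : ℂ) • s + Complex.I • f := by
      rw [Matrix.mulVec_add, Matrix.mulVec_smul, hPss, hPsf, neg_one_smul]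
    rw [hPsw, hdot, hψ]
    ext k
    simp only [Pi.add_apply, Pi.sub_apply, Pi.smul_apply, Pi.neg_apply, smul_eq_mul]
    linear_combination (-2 * s k) * ha2 + (2 * Complex.I * f k) * hb2 + (-2 * a * b * f k) * Complex.I_sq
  · -- eigenvalue e^{-2iθ}
    rw [key, hexpm]
    have hPsw : Ps.mulVec (s - Complex.I • f) = (-1 : ℂ) • s - Complex.I • f := by
      rw [Matrix.mulVec_sub, Matrix.mulVec_smul, hPss, hPsf, neg_one_smul]
    have hrw : (-1 : ℂ) • s - Complex.I • f = (-1 : ℂ) • s + (-Complex.I) • f := by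
      ext k
      simp only [Pi.add_apply, Pi.sub_apply, Pi.smul_apply, Pi.neg_apply, smul_eq_mul]
      ring
    rw [hPsw, hrw, hdot, hψ]
    ext k
    simp only [Pi.add_apply, Pi.sub_apply, Pi.smul_apply, Pi.neg_apply, smul_eq_mul]
    linear_combination (-2 * s k) * ha2 + (-2 * Complex.I * f k) * hb2 + (-2 * a * b * f k) * Complex.I_sq
end
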